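/- Let 𝓗 be a reduced collection of pairwise distinct sets whose union has at least five elements. Suppose that either the 1×4 matrix (0000) or the 1×4 matrix (1111) can be found in 𝓗, i.e. there exist a set H in 𝓗 and four distinct elements e₁, e₂, e₃, e₄ of ⋃𝓗 such that H ∩ {e₁,e₂,e₃,e₄} = ∅, or {e₁,e₂,e₃,e₄} ⊆ H. Then at least one of the 3-singleton matrix S³, the 3-cosingleton matrix S̄³, and the 3-monotone matrix M³ can be found in 𝓗. -/

import Mathlib

/-- A 0-1 matrix `N` (given as a `Prop`-valued matrix, `N i j` meaning entry 1)
with rows indexed by `Fin a` and columns by `Fin b` *can be found* in a collection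
of sets `𝓗` if there are `a` distinct sets of `𝓗` and `b` distinct elements of
`⋃₀ 𝓗` such that `N` is the incidence matrix of the sets over the elements. -/
def FoundIn {α : Type*} {a b : ℕ} (N : Fin a → Fin b → Prop) (𝓗 : Set (Set α)) : Prop :=
  ∃ (H : Fin a → Set α) (e : Fin b → α),
    Function.Injective H ∧ Function.Injective e ∧
    (∀ i, H i ∈ 𝓗) ∧ (∀ j, e j ∈ ⋃₀ 𝓗) ∧
    (∀ i j, e j ∈ H i ↔ N i j)

/-- The `n`-singleton matrix `Sⁿ`: `n+1` rows, `n` columns, entry 1 iff `i = j+1`. -/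
def singletonMatrix (n : ℕ) : Fin (n + 1) → Fin n → Prop :=
  fun i j => (i : ℕ) = (j : ℕ) + 1

/-- The `n`-cosingleton matrix `S̄ⁿ`: `n+1` rows, `n` columns, entry 0 iff `i = j`. -/
def cosingletonMatrix (n : ℕ) : Fin (n + 1) → Fin n → Prop :=
  fun i j => (i : ℕ) ≠ (j : ℕ)

/-- The `n`-monotone matrix `Mⁿ`: `n+1` rows, `n` columns, entry 1 iff `i ≥ j+1`. -/
def monotoneMatrix (n : ℕ) : Fin (n + 1) → Fin n → Prop :=
  fun i j => (j : ℕ) + 1 ≤ (i : ℕ)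

/-- A collection of sets is *reduced* if every element of the union is useful to
make the sets distinct: for every `x ∈ ⋃₀ 𝓗` there are two distinct sets `A ≠ B`
of `𝓗` with `A \ {x} = B \ {x}`. -/
def Reduced {α : Type*} (𝓗 : Set (Set α)) : Prop :=
  ∀ x ∈ ⋃₀ 𝓗, ∃ A ∈ 𝓗, ∃ B ∈ 𝓗, A ≠ B ∧ A \ {x} = B \ {x}

/-! ### Auxiliary machinery -/

namespace RZaux

/-- Boolean version of `S³`. -/
def bS3 : Fin 4 → Fin 3 → Bool := fun i j => (i : ℕ) == (j : ℕ) + 1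
/-- Boolean version of `S̄³`. -/
def bSb3 : Fin 4 → Fin 3 → Bool := fun i j => !((i : ℕ) == (j : ℕ))
/-- Boolean version of `M³`. -/
def bM3 : Fin 4 → Fin 3 → Bool := fun i j => decide ((j : ℕ) + 1 ≤ (i : ℕ))

def v3 {β : Type*} (x0 x1 x2 : β) : Fin 3 → β := fun i =>
  match i with | 0 => x0 | 1 => x1 | 2 => x2
def v4 {β : Type*} (x0 x1 x2 x3 : β) : Fin 4 → β := fun i =>
  match i with | 0 => x0 | 1 => x1 | 2 => x2 | 3 => x3

/-- 3-bit projection of a mask `w` at columns `c`. -/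
def projT (w : ℕ) (c : ℕ × ℕ × ℕ) : ℕ :=
  (w.testBit c.1).toNat + 2 * (w.testBit c.2.1).toNat + 4 * (w.testBit c.2.2).toNat

/-- bitmap of the projections of the members of `fam` at columns `c`. -/
def bmap (fam : List ℕ) (c : ℕ × ℕ × ℕ) : ℕ :=
  fam.foldl (fun a w => a ||| (1 <<< projT w c)) 0

/-- Does `fam` contain one of the three configurations `S³`, `S̄³`, `M³`? -/
def configCheckM (fam : List ℕ) (cols : List (ℕ × ℕ × ℕ)) : Bool :=
  cols.any fun c =>
    ((bmap fam c &&& 23 == 23) || ((bmap fam c &&& 232 == 232) || (bmap fam c &&& 139 == 139)))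

/-- all ordered triples of distinct columns `< n`. -/
def colsN (n : ℕ) : List (ℕ × ℕ × ℕ) :=
  ((List.range n).flatMap fun a => (List.range n).flatMap fun b =>
      (List.range n).map fun c => (a, b, c)).filter
    fun x => x.1 != x.2.1 && x.1 != x.2.2 && x.2.1 != x.2.2

def maskOf4 (f : Fin 4 → Bool) : ℕ :=
  (f 0).toNat + 2 * (f 1).toNat + 4 * (f 2).toNat + 8 * (f 3).toNat

def maskOf5 (f : Fin 5 → Bool) : ℕ :=
  (f 0).toNat + 2 * (f 1).toNat + 4 * (f 2).toNat + 8 * (f 3).toNat + 16 * (f 4).toNat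

theorem maskOf4_testBit : ∀ (f : Fin 4 → Bool) (j : Fin 4), (maskOf4 f).testBit (j : ℕ) = f j := by
  decide

theorem maskOf5_testBit : ∀ (f : Fin 5 → Bool) (j : Fin 5), (maskOf5 f).testBit (j : ℕ) = f j := by
  decide

theorem maskOf4_lt : ∀ f : Fin 4 → Bool, maskOf4 f < 16 := by decide

theorem maskOf4_inj : ∀ f g : Fin 4 → Bool, maskOf4 f = maskOf4 g → f = g := by decide

theorem maskOf4_sgl : ∀ a : Fin 4, maskOf4 (fun j => j == a) = 1 <<< (a : ℕ) := by decide

theorem maskOf4_pair : ∀ a b : Fin 4,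
    maskOf4 (fun j => j == a || j == b) = (1 <<< (a : ℕ)) ||| (1 <<< (b : ℕ)) := by decide

theorem maskOf4_or : ∀ (f : Fin 4 → Bool) (i : Fin 4),
    maskOf4 (fun j => f j || (j == i)) = maskOf4 f ||| (1 <<< (i : ℕ)) := by decide

theorem maskOf5_cons : ∀ (b : Bool) (g : Fin 4 → Bool),
    maskOf5 (Fin.cons b g) = b.toNat ||| ((maskOf4 g) <<< 1) := by decide

theorem mkF : maskOf4 (fun _ : Fin 4 => false) = 0 := by decide
theorem mk0 : maskOf4 (fun k : Fin 4 => k == (0 : Fin 4)) = 1 := by decide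
theorem mk01 : maskOf4 (fun k : Fin 4 => (k == (0 : Fin 4) || k == (1 : Fin 4))) = 3 := by decide
theorem mk2 : maskOf4 (fun k : Fin 4 => k == (2 : Fin 4)) = 4 := by decide
theorem mk23 : maskOf4 (fun k : Fin 4 => (k == (2 : Fin 4) || k == (3 : Fin 4))) = 12 := by decide

/-- spreading a 3-bit value into 4 bits skipping position `i`. -/
def spreads : Fin 4 → ℕ → ℕ := fun i u =>
  match i with
  | 0 => u <<< 1
  | 1 => (u &&& 1) ||| ((u >>> 1) <<< 2)
  | 2 => (u &&& 3) ||| ((u >>> 2) <<< 3)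
  | 3 => u

theorem spreads_exists : ∀ (f : Fin 4 → Bool) (i : Fin 4), f i = false →
    ∃ u : Fin 8, spreads i (u : ℕ) = maskOf4 f := by decide

def fam1M (m0 m1 m2 m3 : ℕ) : List ℕ :=
  [0, m0, m0 ||| 1, m1, m1 ||| 2, m2, m2 ||| 4, m3, m3 ||| 8]

set_option maxRecDepth 100000 in
set_option maxHeartbeats 4000000 in
theorem stage1 : ∀ u0 u1 u2 u3 : Fin 8,
    configCheckM (fam1M (spreads 0 u0) (spreads 1 u1) (spreads 2 u2) (spreads 3 u3))
      (colsN 4) = true ∨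
    ∃ a b c d : Fin 4, a ≠ b ∧ a ≠ c ∧ a ≠ d ∧ b ≠ c ∧ b ≠ d ∧ c ≠ d ∧
      (1 <<< (a : ℕ)) ∈ fam1M (spreads 0 u0) (spreads 1 u1) (spreads 2 u2) (spreads 3 u3) ∧
      ((1 <<< (a : ℕ)) ||| (1 <<< (b : ℕ))) ∈
        fam1M (spreads 0 u0) (spreads 1 u1) (spreads 2 u2) (spreads 3 u3) ∧
      (1 <<< (c : ℕ)) ∈ fam1M (spreads 0 u0) (spreads 1 u1) (spreads 2 u2) (spreads 3 u3) ∧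
      ((1 <<< (c : ℕ)) ||| (1 <<< (d : ℕ))) ∈
        fam1M (spreads 0 u0) (spreads 1 u1) (spreads 2 u2) (spreads 3 u3) := by
  decide

def fam2M (h b2 b3 b4 b5 : Bool) (t : ℕ) : List ℕ :=
  [h.toNat, b2.toNat ||| 2, b3.toNat ||| 6, b4.toNat ||| 8, b5.toNat ||| 24,
   t <<< 1, (t <<< 1) ||| 1]

set_option maxRecDepth 100000 in
set_option maxHeartbeats 4000000 in
theorem stage2 : ∀ (h b2 b3 b4 b5 : Bool) (t : Fin 16),
    configCheckM (fam2M h b2 b3 b4 b5 (t : ℕ)) (colsN 5) = true := by decide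

theorem projT_spec {w : ℕ} {c : ℕ × ℕ × ℕ} {p : ℕ} (h : projT w c = p) :
    w.testBit c.1 = p.testBit 0 ∧ w.testBit c.2.1 = p.testBit 1 ∧ w.testBit c.2.2 = p.testBit 2 := by
  have key : ∀ b0 b1 b2 : Bool,
      (b0.toNat + 2 * b1.toNat + 4 * b2.toNat).testBit 0 = b0 ∧
      (b0.toNat + 2 * b1.toNat + 4 * b2.toNat).testBit 1 = b1 ∧
      (b0.toNat + 2 * b1.toNat + 4 * b2.toNat).testBit 2 = b2 := by decide
  subst h
  obtain ⟨k1, k2, k3⟩ := key (w.testBit c.1) (w.testBit c.2.1) (w.testBit c.2.2)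
  exact ⟨k1.symm, k2.symm, k3.symm⟩

theorem bmap_spec {fam : List ℕ} {c : ℕ × ℕ × ℕ} {p : ℕ}
    (h : (bmap fam c).testBit p = true) : ∃ w ∈ fam, projT w c = p := by
  have aux : ∀ (l : List ℕ) (acc : ℕ),
      (l.foldl (fun a w => a ||| (1 <<< projT w c)) acc).testBit p = true →
      acc.testBit p = true ∨ ∃ w ∈ l, projT w c = p := by
    intro l
    induction l with
    | nil => exact fun acc h => Or.inl h
    | cons x xs ih =>
      intro acc h
      rcases ih _ h with hacc | ⟨w, hw, hp⟩
      · rw [Nat.testBit_or] at hacc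
        rcases Bool.or_eq_true_iff.mp hacc with h1 | h2
        · exact Or.inl h1
        · rw [Nat.one_shiftLeft, Nat.testBit_two_pow] at h2
          exact Or.inr ⟨x, List.mem_cons_self, of_decide_eq_true h2⟩
      · exact Or.inr ⟨w, List.mem_cons_of_mem _ hw, hp⟩
  rcases aux fam 0 h with h0 | h1
  · rw [Nat.zero_testBit] at h0; exact absurd h0 (by simp)
  · exact h1

theorem and_mask_bit {bm mask k : ℕ} (h : bm &&& mask = mask) (hk : mask.testBit k = true) :
    bm.testBit k = true := by
  have h2 : (bm &&& mask).testBit k = mask.testBit k := by rw [h]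
  rw [Nat.testBit_and, hk, Bool.and_true] at h2
  exact h2

theorem colsN_spec {n : ℕ} {x : ℕ × ℕ × ℕ} (hx : x ∈ colsN n) :
    x.1 < n ∧ x.2.1 < n ∧ x.2.2 < n ∧ x.1 ≠ x.2.1 ∧ x.1 ≠ x.2.2 ∧ x.2.1 ≠ x.2.2 := by
  rw [colsN, List.mem_filter] at hx
  obtain ⟨hmem, hne⟩ := hx
  simp only [List.mem_flatMap, List.mem_map, List.mem_range] at hmem
  obtain ⟨a, ha, b, hb, c, hc, rfl⟩ := hmem
  simp only [Bool.and_eq_true, bne_iff_ne, ne_eq] at hne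
  exact ⟨ha, hb, hc, hne.1.1, hne.1.2, hne.2⟩

/-- Soundness of the configuration checker. -/
theorem configCheckM_sound {n : ℕ} {fam : List ℕ}
    (h : configCheckM fam (colsN n) = true) :
    ∃ c : Fin 3 → Fin n, Function.Injective c ∧
      ∃ P : Fin 4 → Fin 3 → Bool, (P = bS3 ∨ P = bSb3 ∨ P = bM3) ∧
        ∃ w : Fin 4 → ℕ, (∀ i, w i ∈ fam) ∧
          ∀ i j, (w i).testBit ((c j : ℕ)) = P i j := by
  rw [configCheckM, List.any_eq_true] at h
  obtain ⟨cc, hcmem, hbody⟩ := h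
  obtain ⟨h1, h2, h3, h4, h5, h6⟩ := colsN_spec hcmem
  set c : Fin 3 → Fin n := v3 ⟨cc.1, h1⟩ ⟨cc.2.1, h2⟩ ⟨cc.2.2, h3⟩ with hc
  have hcj : ((c 0 : ℕ) = cc.1) ∧ ((c 1 : ℕ) = cc.2.1) ∧ ((c 2 : ℕ) = cc.2.2) :=
    ⟨rfl, rfl, rfl⟩
  have hcinj : Function.Injective c := by
    intro i j
    fin_cases i <;> fin_cases j <;> intro hij <;>
      first
        | rfl
        | exact absurd (congrArg Fin.val hij) h4
        | exact absurd (congrArg Fin.val hij) h5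
        | exact absurd (congrArg Fin.val hij) h6
        | exact absurd (congrArg Fin.val hij).symm h4
        | exact absurd (congrArg Fin.val hij).symm h5
        | exact absurd (congrArg Fin.val hij).symm h6
  refine ⟨c, hcinj, ?_⟩
  have hbody' : (bmap fam cc &&& 23 = 23) ∨ ((bmap fam cc &&& 232 = 232) ∨
      (bmap fam cc &&& 139 = 139)) := by
    rcases Bool.or_eq_true_iff.mp hbody with h | h
    · exact Or.inl (eq_of_beq h)
    · rcases Bool.or_eq_true_iff.mp h with h' | h'
      · exact Or.inr (Or.inl (eq_of_beq h'))
      · exact Or.inr (Or.inr (eq_of_beq h'))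
  clear hbody
  rename' hbody' => hbody
  have getw : ∀ p : ℕ, (bmap fam cc).testBit p = true → ∃ w ∈ fam, projT w cc = p :=
    fun p hp => bmap_spec hp
  have main : ∀ K : ℕ, bmap fam cc &&& K = K → ∀ p, K.testBit p = true →
      ∃ w ∈ fam, (w.testBit cc.1 = p.testBit 0 ∧ w.testBit cc.2.1 = p.testBit 1 ∧
        w.testBit cc.2.2 = p.testBit 2) := by
    intro K hK p hp
    obtain ⟨w, hw, hproj⟩ := getw p (and_mask_bit hK hp)
    exact ⟨w, hw, projT_spec hproj⟩
  rcases hbody with hK | hK | hK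
  · -- S³ : projections 0, 1, 2, 4 present
    obtain ⟨w0, hw0, hb0⟩ := main 23 hK 0 (by decide)
    obtain ⟨w1, hw1, hb1⟩ := main 23 hK 1 (by decide)
    obtain ⟨w2, hw2, hb2⟩ := main 23 hK 2 (by decide)
    obtain ⟨w3, hw3, hb3⟩ := main 23 hK 4 (by decide)
    refine ⟨bS3, Or.inl rfl, v4 w0 w1 w2 w3, fun i => by fin_cases i <;> assumption, ?_⟩
    obtain ⟨h00, h01, h02⟩ := hb0
    obtain ⟨h10, h11, h12⟩ := hb1
    obtain ⟨h20, h21, h22⟩ := hb2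
    obtain ⟨h30, h31, h32⟩ := hb3
    intro i j
    fin_cases i <;> fin_cases j <;>
      first
        | exact h00 | exact h01 | exact h02
        | exact h10 | exact h11 | exact h12
        | exact h20 | exact h21 | exact h22
        | exact h30 | exact h31 | exact h32
  · -- S̄³ : projections 6, 5, 3, 7 present
    obtain ⟨w0, hw0, hb0⟩ := main 232 hK 6 (by decide)
    obtain ⟨w1, hw1, hb1⟩ := main 232 hK 5 (by decide)
    obtain ⟨w2, hw2, hb2⟩ := main 232 hK 3 (by decide)
    obtain ⟨w3, hw3, hb3⟩ := main 232 hK 7 (by decide)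
    refine ⟨bSb3, Or.inr (Or.inl rfl), v4 w0 w1 w2 w3, fun i => by fin_cases i <;> assumption, ?_⟩
    obtain ⟨h00, h01, h02⟩ := hb0
    obtain ⟨h10, h11, h12⟩ := hb1
    obtain ⟨h20, h21, h22⟩ := hb2
    obtain ⟨h30, h31, h32⟩ := hb3
    intro i j
    fin_cases i <;> fin_cases j <;>
      first
        | exact h00 | exact h01 | exact h02
        | exact h10 | exact h11 | exact h12
        | exact h20 | exact h21 | exact h22
        | exact h30 | exact h31 | exact h32
  · -- M³ : projections 0, 1, 3, 7 present
    obtain ⟨w0, hw0, hb0⟩ := main 139 hK 0 (by decide)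
    obtain ⟨w1, hw1, hb1⟩ := main 139 hK 1 (by decide)
    obtain ⟨w2, hw2, hb2⟩ := main 139 hK 3 (by decide)
    obtain ⟨w3, hw3, hb3⟩ := main 139 hK 7 (by decide)
    refine ⟨bM3, Or.inr (Or.inr rfl), v4 w0 w1 w2 w3, fun i => by fin_cases i <;> assumption, ?_⟩
    obtain ⟨h00, h01, h02⟩ := hb0
    obtain ⟨h10, h11, h12⟩ := hb1
    obtain ⟨h20, h21, h22⟩ := hb2
    obtain ⟨h30, h31, h32⟩ := hb3
    intro i j
    fin_cases i <;> fin_cases j <;>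
      first
        | exact h00 | exact h01 | exact h02
        | exact h10 | exact h11 | exact h12
        | exact h20 | exact h21 | exact h22
        | exact h30 | exact h31 | exact h32

end RZaux

/-! glue -/

open RZaux in
open Classical in
/-- The membership traces, as boolean vectors. -/
noncomputable def RZtr {α : Type*} {n : ℕ} (M : Set α → α → Prop) (g : Fin n → α)
    (S : Set α) : Fin n → Bool := fun j => decide (M S (g j))

open RZaux

section glue

variable {α : Type*} {𝓗 : Set (Set α)}

theorem RZ_pair_of_reduced (hred : Reduced 𝓗) :
    ∀ x ∈ ⋃₀ 𝓗, ∃ C ∈ 𝓗, ∃ D ∈ 𝓗, x ∉ C ∧ x ∈ D ∧ ∀ z, z ≠ x → (z ∈ C ↔ z ∈ D) := by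
  intro x hx
  obtain ⟨A, hA, B, hB, hAB, hdiff⟩ := hred x hx
  have key : ∀ z, z ≠ x → (z ∈ A ↔ z ∈ B) := by
    intro z hz
    constructor
    · intro h
      have hm : z ∈ A \ {x} := ⟨h, hz⟩
      rw [hdiff] at hm
      exact hm.1
    · intro h
      have hm : z ∈ B \ {x} := ⟨h, hz⟩
      rw [← hdiff] at hm
      exact hm.1
  by_cases hxA : x ∈ A
  · by_cases hxB : x ∈ B
    · exact absurd (Set.ext fun z => by
        by_cases hz : z = x
        · subst hz; exact ⟨fun _ => hxB, fun _ => hxA⟩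
        · exact key z hz) hAB
    · exact ⟨B, hB, A, hA, hxB, hxA, fun z hz => (key z hz).symm⟩
  · by_cases hxB : x ∈ B
    · exact ⟨A, hA, B, hB, hxA, hxB, key⟩
    · exact absurd (Set.ext fun z => by
        by_cases hz : z = x
        · subst hz; exact ⟨fun h => absurd h hxA, fun h => absurd h hxB⟩
        · exact key z hz) hAB

/-- The main abstract lemma, stated for an abstract "membership" relation `M`. -/
theorem RZ_aux (M : Set α → α → Prop)
    (hpair : ∀ x ∈ ⋃₀ 𝓗, ∃ C ∈ 𝓗, ∃ D ∈ 𝓗, ¬ M C x ∧ M D x ∧ ∀ z, z ≠ x → (M C z ↔ M D z))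
    (hbig : 5 ≤ (⋃₀ 𝓗).encard)
    (H0 : Set α) (hH0 : H0 ∈ 𝓗) (e : Fin 4 → α) (he : Function.Injective e)
    (heU : ∀ j, e j ∈ ⋃₀ 𝓗) (hHe : ∀ j, ¬ M H0 (e j)) :
    ∃ P : Fin 4 → Fin 3 → Bool, (P = bS3 ∨ P = bSb3 ∨ P = bM3) ∧
      ∃ (R : Fin 4 → Set α) (f : Fin 3 → α),
        Function.Injective f ∧ (∀ i, R i ∈ 𝓗) ∧ (∀ j, f j ∈ ⋃₀ 𝓗) ∧
        ∀ i j, M (R i) (f j) ↔ P i j = true := by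
  classical
  -- a fifth element
  have hrange : (Set.range e).encard ≤ 4 := by
    have hsub : Set.range e ⊆
        insert (e 0) (insert (e 1) (insert (e 2) (insert (e 3) (∅ : Set α)))) := by
      rintro x ⟨i, rfl⟩
      fin_cases i <;> simp
    refine le_trans (Set.encard_le_encard hsub) ?_
    refine le_trans (Set.encard_insert_le _ _) ?_
    have h3 : (insert (e 1) (insert (e 2) (insert (e 3) (∅ : Set α)))).encard ≤ 3 := by
      refine le_trans (Set.encard_insert_le _ _) ?_
      have h2 : (insert (e 2) (insert (e 3) (∅ : Set α))).encard ≤ 2 := by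
        refine le_trans (Set.encard_insert_le _ _) ?_
        have h1 : (insert (e 3) (∅ : Set α)).encard ≤ 1 := by
          refine le_trans (Set.encard_insert_le _ _) ?_
          rw [Set.encard_empty]
          norm_num
        exact add_le_add_left h1 1
      exact add_le_add_left h2 1
    exact add_le_add_left h3 1
  have hnotsub : ¬ (⋃₀ 𝓗 ⊆ Set.range e) := by
    intro hs
    have := le_trans hbig (le_trans (Set.encard_le_encard hs) hrange)
    norm_num at this
  obtain ⟨y, hyU, hy⟩ := Set.not_subset.mp hnotsub
  -- flip pairs for the four elements
  have h4 : ∀ i : Fin 4, ∃ C, C ∈ 𝓗 ∧ ∃ D, D ∈ 𝓗 ∧ ¬ M C (e i) ∧ M D (e i) ∧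
      ∀ z, z ≠ e i → (M C z ↔ M D z) := by
    intro i
    obtain ⟨C, hC, D, hD, h1, h2, h3⟩ := hpair (e i) (heU i)
    exact ⟨C, hC, D, hD, h1, h2, h3⟩
  choose C hC D hD hCx hDx hagree using h4
  -- traces of the C i
  have htrC : ∀ i : Fin 4, RZtr M e (C i) i = false := by
    intro i; simp only [RZtr, decide_eq_false_iff_not]; exact hCx i
  have hu : ∀ i : Fin 4, ∃ u : Fin 8, spreads i (u : ℕ) = maskOf4 (RZtr M e (C i)) :=
    fun i => spreads_exists _ i (htrC i)
  choose u huspec using hu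
  -- trace of D i
  have htrD : ∀ i : Fin 4, RZtr M e (D i) = fun j => RZtr M e (C i) j || (j == i) := by
    intro i; funext j
    by_cases hj : j = i
    · subst hj
      rw [beq_self_eq_true, Bool.or_true]
      exact decide_eq_true (hDx j)
    · have hne : e j ≠ e i := fun hEq => hj (he hEq)
      have : (j == i) = false := by simpa using hj
      rw [this, Bool.or_false]
      simp only [RZtr]
      exact decide_eq_decide.mpr (hagree i (e j) hne).symm
  have hmaskD : ∀ i : Fin 4,
      maskOf4 (RZtr M e (D i)) = maskOf4 (RZtr M e (C i)) ||| (1 <<< (i : ℕ)) := by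
    intro i; rw [htrD i]; exact maskOf4_or _ i
  -- trace of H0
  have htrH : RZtr M e H0 = fun _ => false := by
    funext j; simp only [RZtr, decide_eq_false_iff_not]; exact hHe j
  have hmaskH : maskOf4 (RZtr M e H0) = 0 := by rw [htrH]; rfl
  -- the family and its correspondence
  set famA := fam1M (spreads 0 (u 0)) (spreads 1 (u 1)) (spreads 2 (u 2)) (spreads 3 (u 3))
    with hfamA
  have hfam : ∀ w ∈ famA, ∃ S, S ∈ 𝓗 ∧ w = maskOf4 (RZtr M e S) := by
    intro w hw
    simp only [hfamA, fam1M, List.mem_cons, List.not_mem_nil, or_false] at hw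
    rcases hw with rfl | rfl | rfl | rfl | rfl | rfl | rfl | rfl | rfl
    · exact ⟨H0, hH0, hmaskH.symm⟩
    · exact ⟨C 0, hC 0, huspec 0⟩
    · refine ⟨D 0, hD 0, ?_⟩; rw [hmaskD 0, ← huspec 0]; rfl
    · exact ⟨C 1, hC 1, huspec 1⟩
    · refine ⟨D 1, hD 1, ?_⟩; rw [hmaskD 1, ← huspec 1]; rfl
    · exact ⟨C 2, hC 2, huspec 2⟩
    · refine ⟨D 2, hD 2, ?_⟩; rw [hmaskD 2, ← huspec 2]; rfl
    · exact ⟨C 3, hC 3, huspec 3⟩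
    · refine ⟨D 3, hD 3, ?_⟩; rw [hmaskD 3, ← huspec 3]; rfl
  rcases stage1 (u 0) (u 1) (u 2) (u 3) with hconf | hstruct
  · -- configuration already on the four elements
    obtain ⟨c, hcinj, P, hP, w, hwmem, hbits⟩ := configCheckM_sound (n := 4) hconf
    choose S hS hSw using fun i => hfam (w i) (hwmem i)
    refine ⟨P, hP, S, fun j => e (c j), he.comp hcinj, hS, fun j => heU (c j), ?_⟩
    intro i j
    have := hbits i j
    rw [hSw i, maskOf4_testBit] at this
    rw [← this]
    simp [RZtr]
  · -- structural case: use the fifth element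
    obtain ⟨a, b, c, d, hab, hac, had, hbc, hbd, hcd, hma, hmab, hmc, hmcd⟩ := hstruct
    obtain ⟨Sa, hSa, hSaw⟩ := hfam _ hma
    obtain ⟨Sab, hSab, hSabw⟩ := hfam _ hmab
    obtain ⟨Sc, hSc, hScw⟩ := hfam _ hmc
    obtain ⟨Scd, hScd, hScdw⟩ := hfam _ hmcd
    have htrSa : RZtr M e Sa = fun j => j == a := maskOf4_inj _ _ (by rw [← hSaw, maskOf4_sgl])
    have htrSab : RZtr M e Sab = fun j => j == a || j == b :=
      maskOf4_inj _ _ (by rw [← hSabw, maskOf4_pair])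
    have htrSc : RZtr M e Sc = fun j => j == c := maskOf4_inj _ _ (by rw [← hScw, maskOf4_sgl])
    have htrScd : RZtr M e Scd = fun j => j == c || j == d :=
      maskOf4_inj _ _ (by rw [← hScdw, maskOf4_pair])
    -- pair for y
    obtain ⟨Cy, hCy, Dy, hDy, hCyy, hDyy, hagy⟩ := hpair y hyU
    -- relabeled elements
    set v : Fin 4 → Fin 4 := v4 a b c d with hv
    have hvinj : Function.Injective v := by
      intro i j
      fin_cases i <;> fin_cases j <;> intro hij <;>
        first
          | rfl
          | exact absurd hij hab | exact absurd hij hac | exact absurd hij had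
          | exact absurd hij hbc | exact absurd hij hbd | exact absurd hij hcd
          | exact absurd hij.symm hab | exact absurd hij.symm hac | exact absurd hij.symm had
          | exact absurd hij.symm hbc | exact absurd hij.symm hbd | exact absurd hij.symm hcd
    set e' : Fin 4 → α := fun k => e (v k) with he'
    have he'inj : Function.Injective e' := fun i j hij => hvinj (he hij)
    set E : Fin 5 → α := Fin.cons y e' with hE
    have hEinj : Function.Injective E := by
      rw [hE]
      refine Fin.cons_injective_iff.mpr ⟨?_, he'inj⟩
      rintro ⟨k, hk⟩
      exact hy ⟨v k, hk⟩
    have hEU : ∀ j, E j ∈ ⋃₀ 𝓗 := by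
      intro j
      refine Fin.cases ?_ ?_ j
      · exact hyU
      · intro k; exact heU (v k)
    have he'y : ∀ k, e' k ≠ y := fun k hk => hy ⟨v k, hk⟩
    -- five-column traces
    have htr5 : ∀ S : Set α, RZtr M E S = Fin.cons (decide (M S y)) (RZtr M e' S) := by
      intro S; funext j
      refine Fin.cases ?_ ?_ j
      · simp [RZtr, hE]
      · intro k; simp [RZtr, hE]
    have hv_eq : ∀ k m : Fin 4, ((v k) == (v m)) = (k == m) := by
      intro k m
      apply Bool.eq_iff_iff.mpr
      simp only [beq_iff_eq]
      exact hvinj.eq_iff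
    -- relabeled traces of the four structural sets
    have htrSa' : RZtr M e' Sa = fun k : Fin 4 => (k == (0 : Fin 4)) := by
      funext k
      have h1 : RZtr M e' Sa k = RZtr M e Sa (v k) := rfl
      rw [h1, htrSa]
      exact hv_eq k 0
    have htrSab' : RZtr M e' Sab = fun k : Fin 4 => (k == (0 : Fin 4) || k == (1 : Fin 4)) := by
      funext k
      have h1 : RZtr M e' Sab k = RZtr M e Sab (v k) := rfl
      rw [h1, htrSab]
      show ((v k) == (v 0) || (v k) == (v 1)) = _
      rw [hv_eq k 0, hv_eq k 1]
    have htrSc' : RZtr M e' Sc = fun k : Fin 4 => (k == (2 : Fin 4)) := by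
      funext k
      have h1 : RZtr M e' Sc k = RZtr M e Sc (v k) := rfl
      rw [h1, htrSc]
      exact hv_eq k 2
    have htrScd' : RZtr M e' Scd = fun k : Fin 4 => (k == (2 : Fin 4) || k == (3 : Fin 4)) := by
      funext k
      have h1 : RZtr M e' Scd k = RZtr M e Scd (v k) := rfl
      rw [h1, htrScd]
      show ((v k) == (v 2) || (v k) == (v 3)) = _
      rw [hv_eq k 2, hv_eq k 3]
    have htrH' : RZtr M e' H0 = fun _ : Fin 4 => false := by
      funext k
      exact decide_eq_false (hHe (v k))
    have htrDy' : RZtr M e' Dy = RZtr M e' Cy := by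
      funext k
      exact (decide_eq_decide.mpr (hagy (e' k) (he'y k))).symm
    have hs2 := stage2 (decide (M H0 y)) (decide (M Sa y)) (decide (M Sab y))
      (decide (M Sc y)) (decide (M Scd y)) ⟨maskOf4 (RZtr M e' Cy), maskOf4_lt _⟩
    have hfam5 : ∀ w ∈ fam2M (decide (M H0 y)) (decide (M Sa y)) (decide (M Sab y))
        (decide (M Sc y)) (decide (M Scd y)) (maskOf4 (RZtr M e' Cy)),
        ∃ S, S ∈ 𝓗 ∧ w = maskOf5 (RZtr M E S) := by
      intro w hw
      simp only [fam2M, List.mem_cons, List.not_mem_nil, or_false] at hw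
      rcases hw with rfl | rfl | rfl | rfl | rfl | rfl | rfl
      · refine ⟨H0, hH0, ?_⟩
        rw [htr5, maskOf5_cons, htrH', mkF]
        simp
      · refine ⟨Sa, hSa, ?_⟩
        rw [htr5, maskOf5_cons, htrSa', mk0]
        rfl
      · refine ⟨Sab, hSab, ?_⟩
        rw [htr5, maskOf5_cons, htrSab', mk01]
        rfl
      · refine ⟨Sc, hSc, ?_⟩
        rw [htr5, maskOf5_cons, htrSc', mk2]
        rfl
      · refine ⟨Scd, hScd, ?_⟩
        rw [htr5, maskOf5_cons, htrScd', mk23]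
        rfl
      · refine ⟨Cy, hCy, ?_⟩
        rw [htr5, maskOf5_cons, decide_eq_false hCyy]
        simp
      · refine ⟨Dy, hDy, ?_⟩
        rw [htr5, maskOf5_cons, decide_eq_true hDyy, htrDy']
        rw [Bool.toNat_true, Nat.lor_comm]
    obtain ⟨c5, hc5inj, P, hP, w, hwmem, hbits⟩ := configCheckM_sound (n := 5) hs2
    choose S hS hSw using fun i => hfam5 (w i) (hwmem i)
    refine ⟨P, hP, S, fun j => E (c5 j), hEinj.comp hc5inj, hS, fun j => hEU (c5 j), ?_⟩
    intro i j
    have hb := hbits i j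
    rw [hSw i, maskOf5_testBit] at hb
    rw [← hb]
    simp [RZtr]

/-- Build a `FoundIn` from rows, columns, exact incidence and distinctness of pattern rows. -/
theorem RZ_build (N : Fin 4 → Fin 3 → Prop) (R : Fin 4 → Set α) (f : Fin 3 → α)
    (hf : Function.Injective f) (hR : ∀ i, R i ∈ 𝓗) (hfU : ∀ j, f j ∈ ⋃₀ 𝓗)
    (hinc : ∀ i j, f j ∈ R i ↔ N i j)
    (hN : ∀ i i', (∀ j, N i j ↔ N i' j) → i = i') : FoundIn N 𝓗 := by
  refine ⟨R, f, ?_, hf, hR, hfU, hinc⟩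
  intro i i' hRii'
  exact hN i i' (fun j => by rw [← hinc, ← hinc, hRii'])

end glue

namespace RZaux

def rho1 : Fin 4 → Fin 4 := v4 1 2 3 0
def rho2 : Fin 4 → Fin 4 := v4 3 0 1 2
def rho3 : Fin 4 → Fin 4 := v4 3 2 1 0
def kap : Fin 3 → Fin 3 := v3 2 1 0

theorem kap_inj : Function.Injective kap := by decide

theorem dS_pos : ∀ (i : Fin 4) (j : Fin 3), singletonMatrix 3 i j ↔ bS3 i j = true := by
  unfold singletonMatrix; decide
theorem dSb_pos : ∀ (i : Fin 4) (j : Fin 3), cosingletonMatrix 3 i j ↔ bSb3 i j = true := by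
  unfold cosingletonMatrix; decide
theorem dM_pos : ∀ (i : Fin 4) (j : Fin 3), monotoneMatrix 3 i j ↔ bM3 i j = true := by
  unfold monotoneMatrix; decide

theorem dS_neg : ∀ (i : Fin 4) (j : Fin 3),
    cosingletonMatrix 3 i j ↔ ¬ (bS3 (rho1 i) j = true) := by
  unfold cosingletonMatrix; decide
theorem dSb_neg : ∀ (i : Fin 4) (j : Fin 3),
    singletonMatrix 3 i j ↔ ¬ (bSb3 (rho2 i) j = true) := by
  unfold singletonMatrix; decide
theorem dM_neg : ∀ (i : Fin 4) (j : Fin 3),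
    monotoneMatrix 3 i j ↔ ¬ (bM3 (rho3 i) (kap j) = true) := by
  unfold monotoneMatrix; decide

theorem rowsS : ∀ i i' : Fin 4,
    (∀ j, singletonMatrix 3 i j ↔ singletonMatrix 3 i' j) → i = i' := by
  unfold singletonMatrix; decide
theorem rowsSb : ∀ i i' : Fin 4,
    (∀ j, cosingletonMatrix 3 i j ↔ cosingletonMatrix 3 i' j) → i = i' := by
  unfold cosingletonMatrix; decide
theorem rowsM : ∀ i i' : Fin 4,
    (∀ j, monotoneMatrix 3 i j ↔ monotoneMatrix 3 i' j) → i = i' := by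
  unfold monotoneMatrix; decide

end RZaux

/-- **Lemma.** If `𝓗` is reduced, its union has at least five elements, and the
`1 × 4` matrix `(0000)` or the `1 × 4` matrix `(1111)` can be found in `𝓗`, then
one of `S³`, `S̄³`, `M³` can be found in `𝓗`. -/
theorem reduced_0000_or_1111 {α : Type*} (𝓗 : Set (Set α)) (hred : Reduced 𝓗)
    (hbig : 5 ≤ (⋃₀ 𝓗).encard)
    (h : FoundIn (fun (_ : Fin 1) (_ : Fin 4) => False) 𝓗 ∨
         FoundIn (fun (_ : Fin 1) (_ : Fin 4) => True) 𝓗) :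
    FoundIn (singletonMatrix 3) 𝓗 ∨ FoundIn (cosingletonMatrix 3) 𝓗 ∨
    FoundIn (monotoneMatrix 3) 𝓗 := by
  classical
  have hpairs := RZ_pair_of_reduced hred
  rcases h with h0 | h1
  · -- 0000 case : M S x := x ∈ S
    obtain ⟨H, e, hHinj, heinj, hH, heU, hinc⟩ := h0
    have hHe : ∀ j, ¬ (e j ∈ H 0) := fun j hm => (hinc 0 j).mp hm
    obtain ⟨P, hP, R, f, hf, hR, hfU, hMinc⟩ :=
      RZ_aux (𝓗 := 𝓗) (fun S x => x ∈ S)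
        (fun x hx => by
          obtain ⟨C, hC, D, hD, h1, h2, h3⟩ := hpairs x hx
          exact ⟨C, hC, D, hD, h1, h2, h3⟩)
        hbig (H 0) (hH 0) e heinj heU hHe
    rcases hP with rfl | rfl | rfl
    · exact Or.inl (RZ_build _ R f hf hR hfU
        (fun i j => by rw [dS_pos]; exact hMinc i j) rowsS)
    · exact Or.inr (Or.inl (RZ_build _ R f hf hR hfU
        (fun i j => by rw [dSb_pos]; exact hMinc i j) rowsSb))
    · exact Or.inr (Or.inr (RZ_build _ R f hf hR hfU
        (fun i j => by rw [dM_pos]; exact hMinc i j) rowsM))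
  · -- 1111 case : M S x := x ∉ S
    obtain ⟨H, e, hHinj, heinj, hH, heU, hinc⟩ := h1
    have hHe : ∀ j, ¬ (e j ∉ H 0) := fun j hm => hm ((hinc 0 j).mpr trivial)
    obtain ⟨P, hP, R, f, hf, hR, hfU, hMinc⟩ :=
      RZ_aux (𝓗 := 𝓗) (fun S x => x ∉ S)
        (fun x hx => by
          obtain ⟨C, hC, D, hD, h1, h2, h3⟩ := hpairs x hx
          exact ⟨D, hD, C, hC, fun hn => hn h2, h1,
            fun z hz => not_iff_not.mpr ((h3 z hz).symm)⟩)
        hbig (H 0) (hH 0) e heinj heU hHe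
    rcases hP with rfl | rfl | rfl
    · -- complement of S³ : cosingleton
      refine Or.inr (Or.inl (RZ_build _ (fun i => R (rho1 i)) f hf
        (fun i => hR (rho1 i)) hfU ?_ rowsSb))
      intro i j
      rw [dS_neg]
      have := hMinc (rho1 i) j
      tauto
    · -- complement of S̄³ : singleton
      refine Or.inl (RZ_build _ (fun i => R (rho2 i)) f hf
        (fun i => hR (rho2 i)) hfU ?_ rowsS)
      intro i j
      rw [dSb_neg]
      have := hMinc (rho2 i) j
      tauto
    · -- complement of M³ : monotone
      refine Or.inr (Or.inr (RZ_build _ (fun i => R (rho3 i)) (fun j => f (kap j))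
        (hf.comp kap_inj) (fun i => hR (rho3 i)) (fun j => hfU (kap j)) ?_ rowsM))
      intro i j
      rw [dM_neg]
      have := hMinc (rho3 i) (kap j)
      tauto
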